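/- Let (X_{i,j})_{i,j ≥ 1} be a double array of square-integrable real random variables with sup_{i,j} E[X_{i,j}²] < ∞. Suppose there exists a constant C such that E[(X_{i₁,i₂} − C)(X_{i₃,i₄} − C)] → 0 as min over distinct pairs k ≠ l in {1,2,3,4} of |i_k − i_l| tends to infinity. Then (1/n²)·Σ_{i₁,i₂=1}^{n} X_{i₁,i₂} converges to C in probability as n → ∞. -/

import Mathlib

open MeasureTheory Filter Finset
open scoped ENNReal Topology

lemma aux_int_mul {Ω : Type*} [MeasurableSpace Ω] {μ : Measure Ω} {f g : Ω → ℝ}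
    (hf : MemLp f 2 μ) (hg : MemLp g 2 μ) : Integrable (fun ω => f ω * g ω) μ := by
  refine Integrable.mono' (hf.integrable_sq.add hg.integrable_sq)
    (hf.aestronglyMeasurable.mul hg.aestronglyMeasurable) ?_
  filter_upwards with ω
  simp only [Real.norm_eq_abs, abs_mul, Pi.add_apply]
  nlinarith [abs_nonneg (f ω), abs_nonneg (g ω), sq_abs (f ω), sq_abs (g ω),
    sq_nonneg (|f ω| - |g ω|)]

lemma aux_bd {Ω : Type*} [MeasurableSpace Ω] {μ : Measure Ω}
    {f g : Ω → ℝ} (hf : MemLp f 2 μ) (hg : MemLp g 2 μ) {K : ℝ}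
    (hfK : ∫ ω, f ω ^ 2 ∂μ ≤ K) (hgK : ∫ ω, g ω ^ 2 ∂μ ≤ K) :
    |∫ ω, f ω * g ω ∂μ| ≤ 2 * K := by
  have h1 : |∫ ω, f ω * g ω ∂μ| ≤ ∫ ω, |f ω * g ω| ∂μ := by
    simpa [Real.norm_eq_abs, abs_mul] using
      norm_integral_le_integral_norm (fun ω => f ω * g ω) (μ := μ)
  refine h1.trans ?_
  have h2 : ∫ ω, |f ω * g ω| ∂μ ≤ ∫ ω, f ω ^ 2 + g ω ^ 2 ∂μ := by
    refine integral_mono (aux_int_mul hf hg).abs (hf.integrable_sq.add hg.integrable_sq) ?_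
    intro ω
    simp only [abs_mul]
    nlinarith [abs_nonneg (f ω), abs_nonneg (g ω), sq_abs (f ω), sq_abs (g ω),
      sq_nonneg (|f ω| - |g ω|)]
  refine h2.trans ?_
  rw [integral_add hf.integrable_sq hg.integrable_sq]
  linarith

lemma count_bad (n N : ℕ) :
    ((((Finset.Icc 1 n ×ˢ Finset.Icc 1 n) ×ˢ (Finset.Icc 1 n ×ˢ Finset.Icc 1 n))).filter
      (fun x : (ℕ × ℕ) × ℕ × ℕ => ¬ ∀ k l : Fin 4, k ≠ l →
        N ≤ Nat.dist (![x.1.1, x.1.2, x.2.1, x.2.2] k) (![x.1.1, x.1.2, x.2.1, x.2.2] l))).card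
      ≤ 6 * ((2 * N + 1) * n ^ 3) := by
  classical
  set t := Finset.Icc 1 n with ht
  set Q := (t ×ˢ t) ×ˢ (t ×ˢ t) with hQ
  set F12 := Q.filter (fun x : (ℕ × ℕ) × ℕ × ℕ => Nat.dist x.1.1 x.1.2 < N) with hF12
  set F13 := Q.filter (fun x : (ℕ × ℕ) × ℕ × ℕ => Nat.dist x.1.1 x.2.1 < N) with hF13
  set F14 := Q.filter (fun x : (ℕ × ℕ) × ℕ × ℕ => Nat.dist x.1.1 x.2.2 < N) with hF14
  set F23 := Q.filter (fun x : (ℕ × ℕ) × ℕ × ℕ => Nat.dist x.1.2 x.2.1 < N) with hF23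
  set F24 := Q.filter (fun x : (ℕ × ℕ) × ℕ × ℕ => Nat.dist x.1.2 x.2.2 < N) with hF24
  set F34 := Q.filter (fun x : (ℕ × ℕ) × ℕ × ℕ => Nat.dist x.2.1 x.2.2 < N) with hF34
  have hsub : Q.filter (fun x : (ℕ × ℕ) × ℕ × ℕ => ¬ ∀ k l : Fin 4, k ≠ l →
        N ≤ Nat.dist (![x.1.1, x.1.2, x.2.1, x.2.2] k) (![x.1.1, x.1.2, x.2.1, x.2.2] l))
      ⊆ F12 ∪ (F13 ∪ (F14 ∪ (F23 ∪ (F24 ∪ F34)))) := by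
    intro x hx
    rw [Finset.mem_filter] at hx
    obtain ⟨hxQ, hbad⟩ := hx
    push_neg at hbad
    obtain ⟨k, l, hkl, hd⟩ := hbad
    simp only [Finset.mem_union, hF12, hF13, hF14, hF23, hF24, hF34, Finset.mem_filter]
    clear_value F12 F13 F14 F23 F24 F34 Q t
    clear hF12 hF13 hF14 hF23 hF24 hF34 hQ ht
    fin_cases k <;> fin_cases l <;>
      simp_all [Nat.dist, Matrix.cons_val_zero, Matrix.cons_val_one, Matrix.head_cons] <;>
      omega
  have h12 : F12.card ≤ (2 * N + 1) * n ^ 3 := by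
    calc F12.card ≤ ((t ×ˢ Finset.range (2 * N + 1)) ×ˢ (t ×ˢ t)).card := by
          apply Finset.card_le_card_of_injOn
            (fun x : (ℕ × ℕ) × ℕ × ℕ => ((x.1.1, x.1.2 + N - x.1.1), x.2.1, x.2.2))
          · rintro ⟨⟨a, b⟩, c, d⟩ hx
            simp only [Finset.mem_coe, hF12, hQ, Finset.mem_filter, Finset.mem_product, Finset.mem_range,
              ht, Finset.mem_Icc, Nat.dist] at hx ⊢
            omega
          · rintro ⟨⟨a, b⟩, c, d⟩ hx ⟨⟨a', b'⟩, c', d'⟩ hy hxy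
            simp only [Finset.mem_coe, hF12, hQ, Finset.mem_filter, Finset.mem_product,
              ht, Finset.mem_Icc, Nat.dist] at hx hy
            simp only [Prod.mk.injEq] at hxy ⊢
            omega
      _ = (2 * N + 1) * n ^ 3 := by simp [ht, Nat.card_Icc]; ring
  have h13 : F13.card ≤ (2 * N + 1) * n ^ 3 := by
    calc F13.card ≤ ((t ×ˢ t) ×ˢ (Finset.range (2 * N + 1) ×ˢ t)).card := by
          apply Finset.card_le_card_of_injOn
            (fun x : (ℕ × ℕ) × ℕ × ℕ => ((x.1.1, x.1.2), x.2.1 + N - x.1.1, x.2.2))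
          · rintro ⟨⟨a, b⟩, c, d⟩ hx
            simp only [Finset.mem_coe, hF13, hQ, Finset.mem_filter, Finset.mem_product, Finset.mem_range,
              ht, Finset.mem_Icc, Nat.dist] at hx ⊢
            omega
          · rintro ⟨⟨a, b⟩, c, d⟩ hx ⟨⟨a', b'⟩, c', d'⟩ hy hxy
            simp only [Finset.mem_coe, hF13, hQ, Finset.mem_filter, Finset.mem_product,
              ht, Finset.mem_Icc, Nat.dist] at hx hy
            simp only [Prod.mk.injEq] at hxy ⊢
            omega
      _ = (2 * N + 1) * n ^ 3 := by simp [ht, Nat.card_Icc]; ring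
  have h14 : F14.card ≤ (2 * N + 1) * n ^ 3 := by
    calc F14.card ≤ ((t ×ˢ t) ×ˢ (t ×ˢ Finset.range (2 * N + 1))).card := by
          apply Finset.card_le_card_of_injOn
            (fun x : (ℕ × ℕ) × ℕ × ℕ => ((x.1.1, x.1.2), x.2.1, x.2.2 + N - x.1.1))
          · rintro ⟨⟨a, b⟩, c, d⟩ hx
            simp only [Finset.mem_coe, hF14, hQ, Finset.mem_filter, Finset.mem_product, Finset.mem_range,
              ht, Finset.mem_Icc, Nat.dist] at hx ⊢
            omega
          · rintro ⟨⟨a, b⟩, c, d⟩ hx ⟨⟨a', b'⟩, c', d'⟩ hy hxy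
            simp only [Finset.mem_coe, hF14, hQ, Finset.mem_filter, Finset.mem_product,
              ht, Finset.mem_Icc, Nat.dist] at hx hy
            simp only [Prod.mk.injEq] at hxy ⊢
            omega
      _ = (2 * N + 1) * n ^ 3 := by simp [ht, Nat.card_Icc]; ring
  have h23 : F23.card ≤ (2 * N + 1) * n ^ 3 := by
    calc F23.card ≤ ((t ×ˢ t) ×ˢ (Finset.range (2 * N + 1) ×ˢ t)).card := by
          apply Finset.card_le_card_of_injOn
            (fun x : (ℕ × ℕ) × ℕ × ℕ => ((x.1.1, x.1.2), x.2.1 + N - x.1.2, x.2.2))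
          · rintro ⟨⟨a, b⟩, c, d⟩ hx
            simp only [Finset.mem_coe, hF23, hQ, Finset.mem_filter, Finset.mem_product, Finset.mem_range,
              ht, Finset.mem_Icc, Nat.dist] at hx ⊢
            omega
          · rintro ⟨⟨a, b⟩, c, d⟩ hx ⟨⟨a', b'⟩, c', d'⟩ hy hxy
            simp only [Finset.mem_coe, hF23, hQ, Finset.mem_filter, Finset.mem_product,
              ht, Finset.mem_Icc, Nat.dist] at hx hy
            simp only [Prod.mk.injEq] at hxy ⊢
            omega
      _ = (2 * N + 1) * n ^ 3 := by simp [ht, Nat.card_Icc]; ring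
  have h24 : F24.card ≤ (2 * N + 1) * n ^ 3 := by
    calc F24.card ≤ ((t ×ˢ t) ×ˢ (t ×ˢ Finset.range (2 * N + 1))).card := by
          apply Finset.card_le_card_of_injOn
            (fun x : (ℕ × ℕ) × ℕ × ℕ => ((x.1.1, x.1.2), x.2.1, x.2.2 + N - x.1.2))
          · rintro ⟨⟨a, b⟩, c, d⟩ hx
            simp only [Finset.mem_coe, hF24, hQ, Finset.mem_filter, Finset.mem_product, Finset.mem_range,
              ht, Finset.mem_Icc, Nat.dist] at hx ⊢
            omega
          · rintro ⟨⟨a, b⟩, c, d⟩ hx ⟨⟨a', b'⟩, c', d'⟩ hy hxy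
            simp only [Finset.mem_coe, hF24, hQ, Finset.mem_filter, Finset.mem_product,
              ht, Finset.mem_Icc, Nat.dist] at hx hy
            simp only [Prod.mk.injEq] at hxy ⊢
            omega
      _ = (2 * N + 1) * n ^ 3 := by simp [ht, Nat.card_Icc]; ring
  have h34 : F34.card ≤ (2 * N + 1) * n ^ 3 := by
    calc F34.card ≤ ((t ×ˢ t) ×ˢ (t ×ˢ Finset.range (2 * N + 1))).card := by
          apply Finset.card_le_card_of_injOn
            (fun x : (ℕ × ℕ) × ℕ × ℕ => ((x.1.1, x.1.2), x.2.1, x.2.2 + N - x.2.1))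
          · rintro ⟨⟨a, b⟩, c, d⟩ hx
            simp only [Finset.mem_coe, hF34, hQ, Finset.mem_filter, Finset.mem_product, Finset.mem_range,
              ht, Finset.mem_Icc, Nat.dist] at hx ⊢
            omega
          · rintro ⟨⟨a, b⟩, c, d⟩ hx ⟨⟨a', b'⟩, c', d'⟩ hy hxy
            simp only [Finset.mem_coe, hF34, hQ, Finset.mem_filter, Finset.mem_product,
              ht, Finset.mem_Icc, Nat.dist] at hx hy
            simp only [Prod.mk.injEq] at hxy ⊢
            omega
      _ = (2 * N + 1) * n ^ 3 := by simp [ht, Nat.card_Icc]; ring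
  have hu : ∀ (A B : Finset ((ℕ × ℕ) × ℕ × ℕ)) (a b : ℕ), A.card ≤ a → B.card ≤ b →
      (A ∪ B).card ≤ a + b := fun A B a b ha hb =>
    le_trans (Finset.card_union_le _ _) (Nat.add_le_add ha hb)
  have := Finset.card_le_card hsub
  have htot : (F12 ∪ (F13 ∪ (F14 ∪ (F23 ∪ (F24 ∪ F34))))).card ≤
      (2 * N + 1) * n ^ 3 + ((2 * N + 1) * n ^ 3 + ((2 * N + 1) * n ^ 3 +
      ((2 * N + 1) * n ^ 3 + ((2 * N + 1) * n ^ 3 + (2 * N + 1) * n ^ 3)))) :=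
    hu _ _ _ _ h12 (hu _ _ _ _ h13 (hu _ _ _ _ h14 (hu _ _ _ _ h23 (hu _ _ _ _ h24 h34))))
  omega

set_option maxHeartbeats 1000000 in
theorem stmt_4 {Ω : Type*} [MeasurableSpace Ω] (μ : Measure Ω) [IsProbabilityMeasure μ]
    (X : ℕ → ℕ → Ω → ℝ) (C : ℝ)
    (hL2 : ∀ i j, MemLp (X i j) 2 μ)
    (hbdd : ∃ M : ℝ, ∀ i j, ∫ ω, (X i j ω) ^ 2 ∂μ ≤ M)
    (hcov : ∀ ε > (0 : ℝ), ∃ N : ℕ, ∀ i₁ i₂ i₃ i₄ : ℕ,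
      (∀ k l : Fin 4, k ≠ l →
        N ≤ Nat.dist (![i₁, i₂, i₃, i₄] k) (![i₁, i₂, i₃, i₄] l)) →
      |∫ ω, (X i₁ i₂ ω - C) * (X i₃ i₄ ω - C) ∂μ| < ε) :
    TendstoInMeasure μ
      (fun (n : ℕ) (ω : Ω) => (1 / (n : ℝ) ^ 2) * ∑ i₁ ∈ Finset.Icc 1 n, ∑ i₂ ∈ Finset.Icc 1 n, X i₁ i₂ ω)
      atTop (fun _ => C) := by
  classical
  obtain ⟨M, hM⟩ := hbdd
  have hM0 : (0:ℝ) ≤ M := le_trans (integral_nonneg fun ω => sq_nonneg _) (hM 0 0)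
  set Y : ℕ → ℕ → Ω → ℝ := fun i j ω => X i j ω - C with hYdef
  have hY2 : ∀ i j, MemLp (Y i j) 2 μ := fun i j => (hL2 i j).sub (memLp_const C)
  set K : ℝ := 2 * M + 2 * C ^ 2 with hKdef
  have hK0 : (0:ℝ) ≤ K := by positivity
  have hYK : ∀ i j, ∫ ω, Y i j ω ^ 2 ∂μ ≤ K := by
    intro i j
    have h2 : Integrable (fun ω => 2 * X i j ω ^ 2 + 2 * C ^ 2) μ :=
      ((hL2 i j).integrable_sq.const_mul 2).add (integrable_const _)
    have h3 : ∫ ω, Y i j ω ^ 2 ∂μ ≤ ∫ ω, 2 * X i j ω ^ 2 + 2 * C ^ 2 ∂μ := by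
      refine integral_mono (hY2 i j).integrable_sq h2 (fun ω => ?_)
      simp only [hYdef]
      nlinarith [sq_nonneg (X i j ω + C)]
    rw [integral_add ((hL2 i j).integrable_sq.const_mul 2) (integrable_const _)] at h3
    rw [integral_const_mul] at h3
    simp only [integral_const, measure_univ, probReal_univ, ENNReal.toReal_one, smul_eq_mul, one_mul] at h3
    rw [hKdef]
    nlinarith [hM i j]
  have hmul : ∀ p q : ℕ × ℕ, Integrable (fun ω => Y p.1 p.2 ω * Y q.1 q.2 ω) μ :=
    fun p q => aux_int_mul (hY2 _ _) (hY2 _ _)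
  have hcb : ∀ p q : ℕ × ℕ, |∫ ω, Y p.1 p.2 ω * Y q.1 q.2 ω ∂μ| ≤ 2 * K :=
    fun p q => aux_bd (hY2 _ _) (hY2 _ _) (hYK _ _) (hYK _ _)
  set Qn : ℕ → Finset (ℕ × ℕ) := fun n => Finset.Icc 1 n ×ˢ Finset.Icc 1 n with hQn
  set S : ℕ → Ω → ℝ := fun n ω => (1 / (n:ℝ) ^ 2) * ∑ p ∈ Qn n, Y p.1 p.2 ω with hS
  have hSmem : ∀ n, MemLp (S n) 2 μ := by
    intro n
    have h := memLp_finset_sum (μ := μ) (p := (2:ℝ≥0∞)) (Qn n)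
      (f := fun p : ℕ × ℕ => Y p.1 p.2) (fun p _ => hY2 p.1 p.2)
    exact h.const_mul _
  set V : ℕ → ℝ := fun n => ∫ ω, S n ω ^ 2 ∂μ with hV
  have hV0 : ∀ n, 0 ≤ V n := fun n => integral_nonneg fun ω => sq_nonneg _
  have hVeq : ∀ n, V n = (1/(n:ℝ)^2)^2 *
      ∑ z ∈ Qn n ×ˢ Qn n, ∫ ω, Y z.1.1 z.1.2 ω * Y z.2.1 z.2.2 ω ∂μ := by
    intro n
    have e1 : ∀ ω, S n ω ^ 2 = (1/(n:ℝ)^2)^2 *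
        ∑ z ∈ Qn n ×ˢ Qn n, Y z.1.1 z.1.2 ω * Y z.2.1 z.2.2 ω := by
      intro ω
      have : ∑ z ∈ Qn n ×ˢ Qn n, Y z.1.1 z.1.2 ω * Y z.2.1 z.2.2 ω
          = ∑ p ∈ Qn n, ∑ q ∈ Qn n, Y p.1 p.2 ω * Y q.1 q.2 ω :=
        Finset.sum_product _ _ _
      rw [this, ← Finset.sum_mul_sum]
      simp only [hS]
      ring
    calc V n = ∫ ω, (1/(n:ℝ)^2)^2 *
        ∑ z ∈ Qn n ×ˢ Qn n, Y z.1.1 z.1.2 ω * Y z.2.1 z.2.2 ω ∂μ := by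
          simp only [hV]; exact integral_congr_ae (Filter.Eventually.of_forall e1)
      _ = _ := by
          rw [integral_const_mul, integral_finset_sum _ (fun z _ => hmul _ _)]
  have hVsmall : Tendsto V atTop (𝓝 0) := by
    rw [Metric.tendsto_atTop]
    intro ε hε
    obtain ⟨N, hN⟩ := hcov (ε/2) (half_pos hε)
    have hc : Tendsto (fun n : ℕ => (2*K*(6*((2*N+1):ℕ)) : ℝ) / n) atTop (𝓝 0) :=
      tendsto_const_div_atTop_nhds_zero_nat _
    have hev : ∀ᶠ n : ℕ in atTop, (2*K*(6*((2*N+1):ℕ)) : ℝ) / n < ε/2 :=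
      hc.eventually (gt_mem_nhds (half_pos hε))
    obtain ⟨n₀, hn₀⟩ := eventually_atTop.1 (hev.and (eventually_ge_atTop 1))
    refine ⟨n₀, fun n hn => ?_⟩
    obtain ⟨hsmall, hn1⟩ := hn₀ n hn
    rw [Real.dist_eq, sub_zero, abs_of_nonneg (hV0 n)]
    have hnR : (0:ℝ) < (n:ℝ) := by exact_mod_cast hn1
    -- sum bound
    set f : (ℕ × ℕ) × ℕ × ℕ → ℝ := fun z => ∫ ω, Y z.1.1 z.1.2 ω * Y z.2.1 z.2.2 ω ∂μ with hf
    set G : (ℕ × ℕ) × ℕ × ℕ → Prop := fun z => ∀ k l : Fin 4, k ≠ l →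
        N ≤ Nat.dist (![z.1.1, z.1.2, z.2.1, z.2.2] k) (![z.1.1, z.1.2, z.2.1, z.2.2] l) with hG
    have hsum : ∑ z ∈ Qn n ×ˢ Qn n, f z
        ≤ ε/2 * ((n:ℝ)^2)^2 + 2*K*(6*((2*N+1)*n^3) : ℕ) := by
      have h1 : ∑ z ∈ Qn n ×ˢ Qn n, f z ≤ ∑ z ∈ Qn n ×ˢ Qn n, |f z| :=
        Finset.sum_le_sum fun z _ => le_abs_self _
      have h2 : ∑ z ∈ Qn n ×ˢ Qn n, |f z|
          = ∑ z ∈ (Qn n ×ˢ Qn n).filter G, |f z|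
            + ∑ z ∈ (Qn n ×ˢ Qn n).filter (fun z => ¬ G z), |f z| :=
        (Finset.sum_filter_add_sum_filter_not _ _ _).symm
      have h3 : ∑ z ∈ (Qn n ×ˢ Qn n).filter G, |f z| ≤ ε/2 * ((n:ℝ)^2)^2 := by
        have hcard : (((Qn n ×ˢ Qn n).filter G).card : ℝ) ≤ ((n:ℝ)^2)^2 := by
          have : ((Qn n ×ˢ Qn n).filter G).card ≤ (n^2)^2 := by
            refine le_trans (Finset.card_filter_le _ _) ?_
            simp [hQn, Nat.card_Icc]
            ring_nf
            omega
          exact_mod_cast this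
        calc ∑ z ∈ (Qn n ×ˢ Qn n).filter G, |f z|
            ≤ ∑ _z ∈ (Qn n ×ˢ Qn n).filter G, ε/2 := by
              refine Finset.sum_le_sum fun z hz => ?_
              have hGz := (Finset.mem_filter.1 hz).2
              have := hN z.1.1 z.1.2 z.2.1 z.2.2 hGz
              simp only [hf, hYdef]
              exact le_of_lt this
          _ = (((Qn n ×ˢ Qn n).filter G).card : ℝ) * (ε/2) := by
              rw [Finset.sum_const, nsmul_eq_mul]
          _ ≤ ε/2 * ((n:ℝ)^2)^2 := by
              rw [mul_comm]
              exact mul_le_mul_of_nonneg_left hcard (le_of_lt (half_pos hε))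
      have h4 : ∑ z ∈ (Qn n ×ˢ Qn n).filter (fun z => ¬ G z), |f z|
          ≤ 2*K*(6*((2*N+1)*n^3) : ℕ) := by
        have hcard : ((((Qn n ×ˢ Qn n).filter (fun z => ¬ G z)).card : ℝ))
            ≤ ((6*((2*N+1)*n^3) : ℕ) : ℝ) := by
          exact_mod_cast count_bad n N
        calc ∑ z ∈ (Qn n ×ˢ Qn n).filter (fun z => ¬ G z), |f z|
            ≤ ∑ _z ∈ (Qn n ×ˢ Qn n).filter (fun z => ¬ G z), 2*K :=
              Finset.sum_le_sum fun z _ => hcb _ _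
          _ = ((((Qn n ×ˢ Qn n).filter (fun z => ¬ G z)).card : ℝ)) * (2*K) := by
              rw [Finset.sum_const, nsmul_eq_mul]
          _ ≤ 2*K*(6*((2*N+1)*n^3) : ℕ) := by
              rw [mul_comm]
              exact mul_le_mul_of_nonneg_left hcard (by positivity)
      calc ∑ z ∈ Qn n ×ˢ Qn n, f z ≤ ∑ z ∈ Qn n ×ˢ Qn n, |f z| := h1
        _ = _ := h2
        _ ≤ ε/2 * ((n:ℝ)^2)^2 + 2*K*(6*((2*N+1)*n^3) : ℕ) := add_le_add h3 h4
    have hfinal : V n ≤ ε/2 + (2*K*(6*((2*N+1):ℕ)) : ℝ) / n := by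
      rw [hVeq n]
      have hc2 : (0:ℝ) ≤ (1/(n:ℝ)^2)^2 := by positivity
      calc (1/(n:ℝ)^2)^2 * ∑ z ∈ Qn n ×ˢ Qn n, f z
          ≤ (1/(n:ℝ)^2)^2 * (ε/2 * ((n:ℝ)^2)^2 + 2*K*(6*((2*N+1)*n^3) : ℕ)) :=
            mul_le_mul_of_nonneg_left hsum hc2
        _ = ε/2 + (2*K*(6*((2*N+1):ℕ)) : ℝ) / n := by
            push_cast
            field_simp
    linarith
  -- conclude
  refine tendstoInMeasure_of_tendsto_eLpNorm (p := 2) two_ne_zero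
    (fun n => ((memLp_finset_sum (μ := μ) (p := (2:ℝ≥0∞)) (Finset.Icc 1 n)
      (f := fun i₁ ω => ∑ i₂ ∈ Finset.Icc 1 n, X i₁ i₂ ω)
      (fun i _ => memLp_finset_sum (μ := μ) (p := (2:ℝ≥0∞)) (Finset.Icc 1 n)
        (f := fun i₂ => X i i₂) (fun j _ => hL2 i j))).const_mul _).aestronglyMeasurable)
    aestronglyMeasurable_const ?_
  have hFS : ∀ n : ℕ, 1 ≤ n →
      ((fun ω => (1 / (n : ℝ) ^ 2) * ∑ i₁ ∈ Finset.Icc 1 n, ∑ i₂ ∈ Finset.Icc 1 n, X i₁ i₂ ω)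
        - fun _ => C) = S n := by
    intro n hn
    funext ω
    have hnR : ((n:ℝ)) ≠ 0 := by
      have : (0:ℝ) < (n:ℝ) := by exact_mod_cast hn
      linarith
    have hsub : ∑ p ∈ Qn n, Y p.1 p.2 ω
        = (∑ p ∈ Qn n, X p.1 p.2 ω) - (n:ℝ)^2 * C := by
      simp only [hYdef]
      rw [Finset.sum_sub_distrib]
      congr 1
      rw [Finset.sum_const]
      simp only [hQn, Finset.card_product, Nat.card_Icc, Nat.add_sub_cancel,
        nsmul_eq_mul, Nat.cast_mul]
      ring
    have hXs : ∑ p ∈ Qn n, X p.1 p.2 ω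
        = ∑ i₁ ∈ Finset.Icc 1 n, ∑ i₂ ∈ Finset.Icc 1 n, X i₁ i₂ ω := by
      simp only [hQn]
      exact Finset.sum_product _ _ _
    simp only [Pi.sub_apply, hS]
    rw [hsub, hXs]
    field_simp
  have hVnorm : ∀ n : ℕ, eLpNorm (S n) 2 μ = ENNReal.ofReal ((V n) ^ (2⁻¹ : ℝ)) := by
    intro n
    rw [(hSmem n).eLpNorm_eq_integral_rpow_norm two_ne_zero ENNReal.ofNat_ne_top]
    have h2r : ((2:ℝ≥0∞)).toReal = (2:ℝ) := by simp
    rw [h2r]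
    congr 1
    congr 1
    · simp only [hV]
      refine integral_congr_ae (Filter.Eventually.of_forall fun ω => ?_)
      show ‖S n ω‖ ^ (2:ℝ) = S n ω ^ 2
      rw [Real.norm_eq_abs, show (2:ℝ) = ((2:ℕ):ℝ) by norm_num, Real.rpow_natCast, sq_abs]
  have hT : Tendsto (fun n => ENNReal.ofReal ((V n) ^ (2⁻¹:ℝ))) atTop (𝓝 0) := by
    have h1 : Tendsto (fun n => (V n) ^ (2⁻¹:ℝ)) atTop (𝓝 ((0:ℝ) ^ (2⁻¹:ℝ))) :=
      hVsmall.rpow_const (Or.inr (by norm_num))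
    rw [Real.zero_rpow (by norm_num)] at h1
    have h2 := ENNReal.tendsto_ofReal h1
    simpa using h2
  refine hT.congr' ?_
  filter_upwards [eventually_ge_atTop 1] with n hn
  rw [hFS n hn]
  exact (hVnorm n).symm
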